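/- Let P ⊆ R^2 be a convex polygon whose vertices all lie on a circle centered at the origin. Suppose that for every edge e of P, the orthogonal projection of P onto the line through the origin perpendicular to e is a segment centered at the origin. Then P is centrally symmetric, i.e., P = -P. -/

import Mathlib

open scoped RealInnerProductSpace

/-- `[u,v]` is an edge of `P`: it is the face of `P` maximizing some nonzero
linear functional. -/
def IsPolygonEdge (P : Set (EuclideanSpace ℝ (Fin 2)))
    (u v : EuclideanSpace ℝ (Fin 2)) : Prop :=
  u ≠ v ∧ ∃ η : EuclideanSpace ℝ (Fin 2), η ≠ 0 ∧
    {x ∈ P | ∀ y ∈ P, ⟪η, y⟫ ≤ ⟪η, x⟫} = segment ℝ u v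

section Helpers

abbrev E2' := EuclideanSpace ℝ (Fin 2)

noncomputable def Jm (x : E2') : E2' := (WithLp.equiv 2 (Fin 2 → ℝ)).symm ![-x 1, x 0]

lemma inner_E2 (x y : E2') : ⟪x,y⟫ = x 0 * y 0 + x 1 * y 1 := by
  simp [PiLp.inner_apply, Fin.sum_univ_two, RCLike.inner_apply, mul_comm]

@[simp] lemma Jm_zero (x : E2') : Jm x 0 = -x 1 := by simp [Jm]
@[simp] lemma Jm_one (x : E2') : Jm x 1 = x 0 := by simp [Jm]

lemma inner_Jm_self (x : E2') : ⟪x, Jm x⟫ = 0 := by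
  simp [inner_E2]; ring

lemma inner_Jm_Jm (x : E2') : ⟪Jm x, Jm x⟫ = ⟪x, x⟫ := by
  simp only [inner_E2, Jm_zero, Jm_one]; ring

lemma decomp (η x : E2') : ⟪η,η⟫ • x = ⟪η,x⟫ • η + ⟪Jm η, x⟫ • Jm η := by
  rw [inner_E2 η η]
  ext i
  fin_cases i <;>
    simp [inner_E2, PiLp.smul_apply, PiLp.add_apply, smul_eq_mul] <;> ring

/-- If three points have equal norms and equal inner product against a nonzero
vector `η`, and two of them are distinct, then the third is one of the two. -/
lemma circle_line {η u v p : E2'} (hη : η ≠ 0) (huv : u ≠ v)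
    (hnv : ‖v‖ = ‖u‖) (hnp : ‖p‖ = ‖u‖)
    (h1 : ⟪η,v⟫ = ⟪η,u⟫) (h2 : ⟪η,p⟫ = ⟪η,u⟫) : p = u ∨ p = v := by
  have hk : (0:ℝ) < ⟪η,η⟫ :=
    lt_of_le_of_ne real_inner_self_nonneg (fun h => hη (inner_self_eq_zero.1 h.symm))
  have hdv : ⟪η,η⟫ • (u - v) = ⟪Jm η, u - v⟫ • Jm η := by
    have := decomp η (u - v)
    rwa [inner_sub_right, h1, sub_self, zero_smul, zero_add] at this
  have hdp : ⟪η,η⟫ • (u - p) = ⟪Jm η, u - p⟫ • Jm η := by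
    have := decomp η (u - p)
    rwa [inner_sub_right, h2, sub_self, zero_smul, zero_add] at this
  set c := ⟪Jm η, u - v⟫ with hc
  set d := ⟪Jm η, u - p⟫ with hd
  have hcne : c ≠ 0 := by
    intro h
    apply huv
    have : ⟪η,η⟫ • (u - v) = 0 := by rw [hdv, h, zero_smul]
    rcases smul_eq_zero.1 this with h' | h'
    · exact absurd h' hk.ne'
    · exact sub_eq_zero.1 h'
  have hnorm : ∀ w : E2', ‖w‖ = ‖u‖ → ⟪u - w, u + w⟫ = 0 := by
    intro w hw
    have : ⟪u,u⟫ = ⟪w,w⟫ := by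
      rw [real_inner_self_eq_norm_sq, real_inner_self_eq_norm_sq, hw]
    rw [inner_sub_left, inner_add_right, inner_add_right]
    rw [real_inner_comm w u] at *
    linarith [this]
  have hcval : c * ⟪Jm η, u + v⟫ = 0 := by
    have h0 : ⟪η,η⟫ * ⟪u - v, u + v⟫ = c * ⟪Jm η, u + v⟫ := by
      rw [← real_inner_smul_left, hdv, real_inner_smul_left]
    rw [← h0, hnorm v hnv, mul_zero]
  have hsum : ⟪Jm η, u + v⟫ = 0 := by
    rcases mul_eq_zero.1 hcval with h | h
    · exact absurd h hcne
    · exact h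
  by_cases hdz : d = 0
  · left
    have : ⟪η,η⟫ • (u - p) = 0 := by rw [hdp, hdz, zero_smul]
    rcases smul_eq_zero.1 this with h' | h'
    · exact absurd h' hk.ne'
    · exact (sub_eq_zero.1 h').symm
  · right
    have hdval : d * ⟪Jm η, u + p⟫ = 0 := by
      have h0 : ⟪η,η⟫ * ⟪u - p, u + p⟫ = d * ⟪Jm η, u + p⟫ := by
        rw [← real_inner_smul_left, hdp, real_inner_smul_left]
      rw [← h0, hnorm p hnp, mul_zero]
    have hsump : ⟪Jm η, u + p⟫ = 0 := by
      rcases mul_eq_zero.1 hdval with h | h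
      · exact absurd h hdz
      · exact h
    have hc2 : c = 2 * ⟪Jm η, u⟫ := by
      rw [hc, inner_sub_right]
      have : ⟪Jm η, v⟫ = -⟪Jm η, u⟫ := by
        have := hsum; rw [inner_add_right] at this; linarith
      rw [this]; ring
    have hd2 : d = 2 * ⟪Jm η, u⟫ := by
      rw [hd, inner_sub_right]
      have : ⟪Jm η, p⟫ = -⟪Jm η, u⟫ := by
        have := hsump; rw [inner_add_right] at this; linarith
      rw [this]; ring
    have heq : ⟪η,η⟫ • (u - p) = ⟪η,η⟫ • (u - v) := by
      rw [hdp, hdv, hd2, ← hc2, hc2]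
    have := smul_right_injective E2' hk.ne' heq
    exact sub_right_injective this

lemma halfspace_bound {V : Finset E2'} {η u : E2'} (hmax : ∀ v ∈ V, ⟪η,v⟫ ≤ ⟪η,u⟫) :
    ∀ y ∈ convexHull ℝ (V : Set E2'), ⟪η,y⟫ ≤ ⟪η,u⟫ := by
  intro y hy
  have hconv : Convex ℝ {x : E2' | ⟪η,x⟫ ≤ ⟪η,u⟫} :=
    convex_halfSpace_le ⟨fun a b => inner_add_right η a b, fun c x => real_inner_smul_right η x c⟩ _
  exact convexHull_min (fun v hv => hmax v hv) hconv hy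

lemma face_eq_segment {V : Finset E2'} {η u w : E2'} (hu : u ∈ V) (hw : w ∈ V) (hne : u ≠ w)
    (hmax : ∀ v ∈ V, ⟪η,v⟫ ≤ ⟪η,u⟫) (hweq : ⟪η,w⟫ = ⟪η,u⟫)
    (honly : ∀ v ∈ V, ⟪η,v⟫ = ⟪η,u⟫ → v = u ∨ v = w) :
    {x ∈ convexHull ℝ (V : Set E2') | ∀ y ∈ convexHull ℝ (V : Set E2'), ⟪η,y⟫ ≤ ⟪η,x⟫}
      = segment ℝ u w := by
  have huP : u ∈ convexHull ℝ (V : Set E2') := subset_convexHull ℝ _ hu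
  apply Set.Subset.antisymm
  · rintro x ⟨hxP, hxmax⟩
    have hxη : ⟪η,x⟫ = ⟪η,u⟫ :=
      le_antisymm (halfspace_bound hmax x hxP) (hxmax u huP)
    rw [Finset.convexHull_eq] at hxP
    obtain ⟨lam, hlam0, hlam1, hlamx⟩ := hxP
    have hkey : ∀ v ∈ V, lam v * (⟪η,u⟫ - ⟪η,v⟫) = 0 := by
      have hsum : ∑ v ∈ V, lam v * (⟪η,u⟫ - ⟪η,v⟫) = 0 := by
        have h1 : ∑ v ∈ V, lam v * ⟪η,v⟫ = ⟪η,x⟫ := by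
          rw [← hlamx, Finset.centerMass, hlam1, inv_one, one_smul, inner_sum]
          exact Finset.sum_congr rfl fun v hv => by
            rw [real_inner_smul_right]; rfl
        have h2 : ∑ v ∈ V, lam v * ⟪η,u⟫ = ⟪η,u⟫ := by
          rw [← Finset.sum_mul, hlam1, one_mul]
        simp only [mul_sub]
        rw [Finset.sum_sub_distrib, h1, h2, hxη, sub_self]
      exact (Finset.sum_eq_zero_iff_of_nonneg fun v hv =>
        mul_nonneg (hlam0 v hv) (sub_nonneg.2 (hmax v hv))).1 hsum
    have hfilter : (V.filter (fun v => lam v ≠ 0)).centerMass lam id = x := by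
      rw [Finset.centerMass_filter_ne_zero, hlamx]
    rw [← convexHull_pair, ← hfilter]
    apply Finset.centerMass_mem_convexHull
    · intro v hv; exact hlam0 v (Finset.mem_filter.1 hv).1
    · rw [Finset.sum_filter_ne_zero, hlam1]; norm_num
    · intro v hv
      obtain ⟨hvV, hvne⟩ := Finset.mem_filter.1 hv
      have hvη : ⟪η,v⟫ = ⟪η,u⟫ := by
        have := hkey v hvV
        rcases mul_eq_zero.1 this with h | h
        · exact absurd h hvne
        · linarith [sub_eq_zero.1 h]
      rcases honly v hvV hvη with h | h <;> simp [h]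
  · rintro x hx
    rw [← convexHull_pair] at hx
    have hxP : x ∈ convexHull ℝ (V : Set E2') := by
      refine convexHull_mono ?_ hx
      intro y hy
      simp only [Set.mem_insert_iff, Set.mem_singleton_iff] at hy
      rcases hy with h | h <;> simp [h, hu, hw]
    refine ⟨hxP, fun y hy => ?_⟩
    have hxη : ⟪η,u⟫ ≤ ⟪η,x⟫ := by
      have hconv : Convex ℝ {p : E2' | ⟪η,u⟫ ≤ ⟪η,p⟫} :=
        convex_halfSpace_ge ⟨fun a b => inner_add_right η a b,
          fun c p => real_inner_smul_right η p c⟩ _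
      refine convexHull_min ?_ hconv hx
      intro p hp
      simp only [Set.mem_insert_iff, Set.mem_singleton_iff] at hp
      show ⟪η,u⟫ ≤ ⟪η,p⟫
      rcases hp with h | h
      · rw [h]
      · rw [h, hweq]
    exact le_trans (halfspace_bound hmax y hy) hxη

lemma sinusoid (A B θ : ℝ) (hA : 0 < A) :
    A * Real.cos θ + B * Real.sin θ
      = (A / Real.cos (Real.arctan (B/A))) * Real.cos (θ - Real.arctan (B/A)) := by
  have hc : 0 < Real.cos (Real.arctan (B/A)) := Real.cos_arctan_pos _
  rw [Real.cos_sub]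
  have ht : Real.sin (Real.arctan (B/A)) / Real.cos (Real.arctan (B/A)) = B / A := by
    rw [← Real.tan_eq_sin_div_cos, Real.tan_arctan]
  have hB : B * Real.cos (Real.arctan (B/A)) = A * Real.sin (Real.arctan (B/A)) := by
    have h2 := ht
    field_simp at h2
    linear_combination -h2
  field_simp
  linear_combination Real.sin θ * hB

end Helpers

theorem stmt_8 (P : Set (EuclideanSpace ℝ (Fin 2)))
    (V : Finset (EuclideanSpace ℝ (Fin 2)))
    (hP : P = convexHull ℝ (V : Set (EuclideanSpace ℝ (Fin 2))))
    (hcard : 3 ≤ V.card) (r : ℝ) (hr : 0 < r)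
    (hV : ∀ v ∈ V, ‖v‖ = r)
    (hproj : ∀ u v, IsPolygonEdge P u v →
      ∀ w : EuclideanSpace ℝ (Fin 2), ⟪w, u - v⟫ = 0 →
        sSup ((fun x => ⟪w, x⟫) '' P) = - sInf ((fun x => ⟪w, x⟫) '' P)) :
    P = -P := by
  classical
  have hPconv : Convex ℝ P := by rw [hP]; exact convex_convexHull ℝ _
  have hPclosed : IsClosed P := by
    rw [hP]; exact (V.finite_toSet.isCompact_convexHull ℝ).isClosed
  have hVP : (V : Set E2') ⊆ P := by rw [hP]; exact subset_convexHull ℝ _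
  have hVne : V.Nonempty := Finset.card_pos.1 (by omega)
  have hPbound : ∀ y ∈ P, ‖y‖ ≤ r := by
    intro y hy
    rw [hP] at hy
    have hsub : convexHull ℝ (V : Set E2') ⊆ Metric.closedBall 0 r := by
      apply convexHull_min _ (convex_closedBall _ _)
      intro v hv
      simp [mem_closedBall_zero_iff, (hV v hv).le]
    simpa [mem_closedBall_zero_iff] using hsub hy
  suffices hsym : ∀ a ∈ V, -a ∈ P by
    have h1 : P ⊆ -P := by
      nth_rewrite 1 [hP]
      refine convexHull_min ?_ hPconv.neg
      intro v hv
      rw [Set.mem_neg]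
      exact hsym v hv
    refine Set.Subset.antisymm h1 ?_
    intro x hx
    rw [Set.mem_neg] at hx
    have := h1 hx
    rwa [Set.mem_neg, neg_neg] at this
  intro a ha
  by_contra hzP
  set z : E2' := -a with hzdef
  -- strict separation of z from P
  obtain ⟨fl, u0, hfl, hfl2⟩ := geometric_hahn_banach_closed_point hPconv hPclosed hzP
  set η₀ : E2' := (InnerProductSpace.toDual ℝ E2').symm fl with hη₀def
  have hsep : ∀ y ∈ P, ⟪η₀, y⟫ < ⟪η₀, z⟫ := by
    intro y hy
    rw [hη₀def, InnerProductSpace.toDual_symm_apply, InnerProductSpace.toDual_symm_apply]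
    exact lt_trans (hfl y hy) hfl2
  set α : E2' → ℝ := fun v => ⟪η₀, z⟫ - ⟪η₀, v⟫ with hαdef
  set β : E2' → ℝ := fun v => ⟪Jm η₀, z⟫ - ⟪Jm η₀, v⟫ with hβdef
  have hα : ∀ v ∈ V, 0 < α v := fun v hv => sub_pos.2 (hsep v (hVP hv))
  have hη₀ne : η₀ ≠ 0 := by
    intro h0
    obtain ⟨v, hv⟩ := hVne
    have := hα v hv
    rw [hαdef] at this
    simp only [h0, inner_zero_left, sub_zero] at this
    exact lt_irrefl 0 this
  set φ : E2' → ℝ := fun v => Real.arctan (β v / α v) with hφdef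
  set f : E2' → ℝ → ℝ := fun v θ => α v * Real.cos θ + β v * Real.sin θ with hfdef
  set ηθ : ℝ → E2' := fun θ => Real.cos θ • η₀ + Real.sin θ • Jm η₀ with hηθdef
  have hfinner : ∀ v θ, f v θ = ⟪ηθ θ, z⟫ - ⟪ηθ θ, v⟫ := by
    intro v θ
    simp only [hfdef, hηθdef, hαdef, hβdef, inner_add_left, real_inner_smul_left]
    ring
  have hηθne : ∀ θ, ηθ θ ≠ 0 := by
    intro θ h0
    have h00 : ⟪Jm η₀, η₀⟫ = (0:ℝ) := by
      rw [real_inner_comm]; exact inner_Jm_self η₀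
    have hval : ⟪ηθ θ, ηθ θ⟫ = ⟪η₀, η₀⟫ := by
      simp only [hηθdef, inner_add_left, inner_add_right, real_inner_smul_left,
        real_inner_smul_right, inner_Jm_self, inner_Jm_Jm, h00]
      linear_combination (⟪η₀, η₀⟫ : ℝ) * Real.sin_sq_add_cos_sq θ
    rw [h0, inner_zero_left] at hval
    exact hη₀ne (inner_self_eq_zero.1 hval.symm)
  have hcosφ : ∀ v, 0 < Real.cos (φ v) := fun v => Real.cos_arctan_pos _
  have hfc : ∀ v ∈ V, ∀ θ, f v θ = (α v / Real.cos (φ v)) * Real.cos (θ - φ v) := by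
    intro v hv θ
    simp only [hfdef, hφdef]
    exact sinusoid (α v) (β v) θ (hα v hv)
  have hφmem : ∀ v, φ v ∈ Set.Ioo (-(Real.pi/2)) (Real.pi/2) := fun v =>
    ⟨Real.neg_pi_div_two_lt_arctan _, Real.arctan_lt_pi_div_two _⟩
  set φ₁ := V.inf' hVne φ with hφ₁def
  set φ₂ := V.sup' hVne φ with hφ₂def
  obtain ⟨v₁, hv₁V, hv₁0⟩ := Finset.exists_mem_eq_inf' hVne φ
  obtain ⟨v₂, hv₂V, hv₂0⟩ := Finset.exists_mem_eq_sup' hVne φ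
  have hv₁ : φ₁ = φ v₁ := by rw [hφ₁def]; exact hv₁0
  have hv₂ : φ₂ = φ v₂ := by rw [hφ₂def]; exact hv₂0
  have hφ₁₂ : φ₁ ≤ φ₂ := le_trans (Finset.inf'_le φ hv₁V) (Finset.le_sup' φ hv₁V)
  have hφ₁lb : -(Real.pi/2) < φ₁ := by
    rw [hv₁]; exact (hφmem v₁).1
  have hφ₂ub : φ₂ < Real.pi/2 := by
    rw [hv₂]; exact (hφmem v₂).2
  set s : ℝ := φ₂ - Real.pi/2 with hsdef
  set t : ℝ := φ₁ + Real.pi/2 with htdef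
  have hst : s < t := by
    have := Real.pi_pos
    simp only [hsdef, htdef]
    nlinarith
  -- nonnegativity on the interval
  have hginterval : ∀ θ ∈ Set.Icc s t, ∀ v ∈ V, 0 ≤ f v θ := by
    intro θ hθ v hv
    rw [hfc v hv θ]
    apply mul_nonneg (le_of_lt (div_pos (hα v hv) (hcosφ v)))
    apply Real.cos_nonneg_of_mem_Icc
    constructor
    · have h1 : φ v ≤ φ₂ := Finset.le_sup' φ hv
      have := hθ.1
      simp only [hsdef] at this
      linarith
    · have h1 : φ₁ ≤ φ v := Finset.inf'_le φ hv
      have := hθ.2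
      simp only [htdef] at this
      linarith
  -- the key step: two distinct minimizing vertices at a point of [s,t] is absurd
  have key : ∀ θ ∈ Set.Icc s t, ∀ u w : E2', u ∈ V → w ∈ V → u ≠ w →
      (∀ v ∈ V, f u θ ≤ f v θ) → f w θ = f u θ → False := by
    intro θ hθ u w hu hw hne hmin hweqf
    set η : E2' := ηθ θ with hηdef
    have hηne : η ≠ 0 := hηθne θ
    have hmax : ∀ v ∈ V, ⟪η, v⟫ ≤ ⟪η, u⟫ := by
      intro v hv
      have h1 := hmin v hv
      rw [hfinner u θ, hfinner v θ] at h1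
      linarith
    have hweq : ⟪η, w⟫ = ⟪η, u⟫ := by
      have := hweqf
      rw [hfinner u θ, hfinner w θ] at this
      linarith
    have honly : ∀ v ∈ V, ⟪η,v⟫ = ⟪η,u⟫ → v = u ∨ v = w := by
      intro v hv hvη
      exact circle_line hηne hne (by rw [hV w hw, hV u hu]) (by rw [hV v hv, hV u hu]) hweq hvη
    have hedge : IsPolygonEdge P u w := by
      refine ⟨hne, η, hηne, ?_⟩
      rw [hP]
      exact face_eq_segment hu hw hne hmax hweq honly
    have horth : ⟪η, u - w⟫ = 0 := by
      rw [inner_sub_right, hweq, sub_self]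
    have hsupinf := hproj u w hedge η horth
    set m : ℝ := ⟪η, u⟫ with hmdef
    have hgreat : IsGreatest ((fun x => ⟪η,x⟫) '' P) m := by
      constructor
      · exact ⟨u, hVP hu, rfl⟩
      · rintro _ ⟨y, hy, rfl⟩
        rw [hP] at hy
        exact halfspace_bound hmax y hy
    have hsSup : sSup ((fun x => ⟪η,x⟫) '' P) = m := hgreat.csSup_eq
    have hsInf : sInf ((fun x => ⟪η,x⟫) '' P) = -m := by
      rw [hsSup] at hsupinf; linarith
    have hbdd : BddBelow ((fun x => ⟪η,x⟫) '' P) := by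
      refine ⟨-(‖η‖ * r), ?_⟩
      rintro _ ⟨y, hy, rfl⟩
      have h1 := abs_real_inner_le_norm η y
      have h2 := hPbound y hy
      have h3 := neg_abs_le (⟪η,y⟫ : ℝ)
      have h4 : ‖η‖ * ‖y‖ ≤ ‖η‖ * r := mul_le_mul_of_nonneg_left h2 (norm_nonneg η)
      simp only
      linarith
    have haP : a ∈ P := hVP ha
    have h1 : -m ≤ ⟪η, a⟫ := by
      rw [← hsInf]
      exact csInf_le hbdd ⟨a, haP, rfl⟩
    have hz1 : ⟪η, z⟫ ≤ m := by
      rw [hzdef, inner_neg_right]; linarith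
    have hfu0 : 0 ≤ f u θ := hginterval θ hθ u hu
    have hzm : ⟪η, z⟫ = m := by
      have := hfinner u θ
      rw [← hηdef, ← hmdef] at this
      linarith
    have hz2 : z = u ∨ z = w := by
      apply circle_line hηne hne (by rw [hV w hw, hV u hu]) _ hweq hzm
      rw [hzdef, norm_neg, hV a ha, hV u hu]
    rcases hz2 with h | h
    · exact hzP (h ▸ hVP hu)
    · exact hzP (h ▸ hVP hw)
  -- case analysis on φ₁ = φ₂ or φ₁ < φ₂
  rcases eq_or_lt_of_le hφ₁₂ with hcase | hcase
  · -- all φ v equal: all f v t = 0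
    have hallφ : ∀ v ∈ V, φ v = φ₁ := by
      intro v hv
      have h1 : φ₁ ≤ φ v := Finset.inf'_le φ hv
      have h2 : φ v ≤ φ₂ := Finset.le_sup' φ hv
      rw [← hcase] at h2
      linarith
    have hallzero : ∀ v ∈ V, f v t = 0 := by
      intro v hv
      have h5 : t - φ v = Real.pi/2 := by rw [htdef, hallφ v hv]; ring
      rw [hfc v hv t, h5, Real.cos_pi_div_two, mul_zero]
    obtain ⟨u, hu, w, hw, hne⟩ := Finset.one_lt_card.1 (by omega : 1 < V.card)
    exact key t ⟨hst.le, le_refl t⟩ u w hu hw hne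
      (fun v hv => by rw [hallzero u hu, hallzero v hv])
      (by rw [hallzero u hu, hallzero w hw])
  · -- φ₁ < φ₂
    have hV'ne : (V.erase v₁).Nonempty := by
      rw [← Finset.card_pos, Finset.card_erase_of_mem hv₁V]
      omega
    set g : ℝ → ℝ := fun θ => V.inf' hVne (fun v => f v θ) with hgdef
    set g' : ℝ → ℝ := fun θ => (V.erase v₁).inf' hV'ne (fun v => f v θ) with hg'def
    have hfcont : ∀ v : E2', Continuous (f v) := fun v => by
      rw [hfdef]
      exact (continuous_const.mul Real.continuous_cos).add
        (continuous_const.mul Real.continuous_sin)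
    have hgcont : Continuous g :=
      Continuous.finset_inf'_apply hVne (fun v _ => hfcont v)
    have hg'cont : Continuous g' :=
      Continuous.finset_inf'_apply hV'ne (fun v _ => hfcont v)
    set S : Set ℝ := Set.Icc s t ∩ {θ | f v₁ θ ≤ g θ} with hSdef
    have hSclosed : IsClosed S :=
      isClosed_Icc.inter (isClosed_le (hfcont v₁) hgcont)
    have htS : t ∈ S := by
      constructor
      · exact ⟨hst.le, le_refl t⟩
      · show f v₁ t ≤ g t
        have hft : f v₁ t = 0 := by
          have h5 : t - φ v₁ = Real.pi/2 := by rw [htdef, ← hv₁]; ring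
          rw [hfc v₁ hv₁V t, h5, Real.cos_pi_div_two, mul_zero]
        rw [hft]
        rw [show g t = V.inf' hVne (fun v => f v t) from rfl, Finset.le_inf'_iff]
        intro v hv
        exact hginterval t ⟨hst.le, le_refl t⟩ v hv
    have hSbdd : BddBelow S := bddBelow_Icc.mono Set.inter_subset_left
    set θs : ℝ := sInf S with hθsdef
    have hθsS : θs ∈ S := IsClosed.csInf_mem hSclosed ⟨t, htS⟩ hSbdd
    have hθsIcc : θs ∈ Set.Icc s t := hθsS.1
    -- s is not in S
    have hfv₁s : 0 < f v₁ s := by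
      have h5 : s - φ v₁ = φ₂ - φ₁ - Real.pi/2 := by rw [hsdef, ← hv₁]; ring
      rw [hfc v₁ hv₁V s, h5, Real.cos_sub_pi_div_two]
      apply mul_pos (div_pos (hα v₁ hv₁V) (hcosφ v₁))
      apply Real.sin_pos_of_pos_of_lt_pi
      · linarith
      · have := Real.pi_pos; linarith
    have hgs : g s ≤ 0 := by
      have hfv₂s : f v₂ s = 0 := by
        have h5 : s - φ v₂ = -(Real.pi/2) := by rw [hsdef, ← hv₂]; ring
        rw [hfc v₂ hv₂V s, h5, Real.cos_neg, Real.cos_pi_div_two, mul_zero]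
      rw [← hfv₂s]
      exact Finset.inf'_le _ hv₂V
    have hsnotS : s ∉ S := by
      intro hs
      have := hs.2
      simp only [Set.mem_setOf_eq] at this
      linarith
    have hsθs : s < θs := by
      rcases lt_or_eq_of_le hθsIcc.1 with h | h
      · exact h
      · exact absurd (h ▸ hθsS) hsnotS
    -- on [s, θs), g' < f v₁
    have hbefore : ∀ θ ∈ Set.Ico s θs, g' θ ≤ f v₁ θ := by
      intro θ hθ
      have hθnotS : θ ∉ S := notMem_of_lt_csInf hθ.2 hSbdd
      have hθIcc : θ ∈ Set.Icc s t := ⟨hθ.1, le_trans hθ.2.le hθsIcc.2⟩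
      have hgth : g θ < f v₁ θ := by
        by_contra hcon
        push_neg at hcon
        exact hθnotS ⟨hθIcc, hcon⟩
      obtain ⟨w', hw'V, hw'⟩ := Finset.exists_mem_eq_inf' hVne (fun v => f v θ)
      have hgw' : g θ = f w' θ := hw'
      have hw'ne : w' ≠ v₁ := by
        intro h
        rw [h] at hgw'
        rw [hgw'] at hgth
        exact lt_irrefl _ hgth
      have h6 : g' θ ≤ f w' θ :=
        Finset.inf'_le _ (Finset.mem_erase.2 ⟨hw'ne, hw'V⟩)
      linarith
    -- extend to θs by continuity
    have hatθs : g' θs ≤ f v₁ θs := by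
      have hcl : Set.Ico s θs ⊆ {θ | g' θ ≤ f v₁ θ} := hbefore
      have hclosed : IsClosed {θ | g' θ ≤ f v₁ θ} := isClosed_le hg'cont (hfcont v₁)
      have : Set.Icc s θs ⊆ {θ | g' θ ≤ f v₁ θ} := by
        rw [← closure_Ico hsθs.ne]
        exact hclosed.closure_subset_iff.2 hcl
      exact this ⟨hθsIcc.1, le_refl θs⟩
    -- get second minimizer
    obtain ⟨w, hwV', hw⟩ := Finset.exists_mem_eq_inf' hV'ne (fun v => f v θs)
    have hwV : w ∈ V := Finset.mem_of_mem_erase hwV'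
    have hwne : v₁ ≠ w := (Finset.ne_of_mem_erase hwV').symm
    have hg'w : g' θs = f w θs := hw
    have hfv₁g : f v₁ θs ≤ g θs := hθsS.2
    have hgv₁ : g θs ≤ f v₁ θs := Finset.inf'_le _ hv₁V
    have hgw : g θs ≤ f w θs := Finset.inf'_le _ hwV
    have hfweq : f w θs = f v₁ θs := by
      have h1 : f w θs ≤ f v₁ θs := by rw [← hg'w]; exact hatθs
      have h2 : f v₁ θs ≤ f w θs := le_trans hfv₁g hgw
      linarith
    have hminprop : ∀ v ∈ V, f v₁ θs ≤ f v θs := by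
      intro v hv
      exact le_trans hfv₁g (Finset.inf'_le _ hv)
    exact key θs hθsIcc v₁ w hv₁V hwV hwne hminprop hfweq
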